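/- arXiv:2304.07155 — 2 statements merged into one kernel-verified Lean document; each statement's English description precedes it below -/
import Mathlib

section
/- Let A and B be unital C*-algebras with states ω_A and ω_B, and let θ : A → B be a unital positive linear map satisfying the Schwarz inequality θ(x)* θ(x) ≤ θ(x* x) and mapping ω_A to ω_B (i.e. ω_B ∘ θ = ω_A). Let (H_A, π_A, Ω_A) and (H_B, π_B, Ω_B) be the GNS constructions of ω_A and ω_B. Then the assignment π_A(x) Ω_A ↦ π_B(θ(x)) Ω_B is well defined on the dense subspace π_A(A) Ω_A and extends uniquely to a contraction L²θ : H_A → H_B. -/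
open scoped ComplexOrder InnerProductSpace

/-- A unital positive map `θ` satisfying the Schwarz inequality and
intertwining the states `ω_A`, `ω_B` induces a unique contraction `L²θ` between the
GNS Hilbert spaces, with `L²θ (π_A(x) Ω_A) = π_B(θ(x)) Ω_B`. -/
theorem stmt8 {A B : Type*}
    [NormedRing A] [StarRing A] [CStarRing A] [CompleteSpace A]
    [NormedAlgebra ℂ A] [StarModule ℂ A] [PartialOrder A] [StarOrderedRing A]
    [NormedRing B] [StarRing B] [CStarRing B] [CompleteSpace B]
    [NormedAlgebra ℂ B] [StarModule ℂ B] [PartialOrder B] [StarOrderedRing B]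
    {HA HB : Type*} [NormedAddCommGroup HA] [InnerProductSpace ℂ HA] [CompleteSpace HA]
    [NormedAddCommGroup HB] [InnerProductSpace ℂ HB] [CompleteSpace HB]
    (ωA : A →ₗ[ℂ] ℂ) (ωB : B →ₗ[ℂ] ℂ)
    -- θ is a unital positive linear map satisfying the Schwarz inequality
    (θ : A →ₗ[ℂ] B) (hθ1 : θ 1 = 1)
    (hθpos : ∀ x : A, 0 ≤ x → 0 ≤ θ x)
    (hSchwarz : ∀ x : A, star (θ x) * θ x ≤ θ (star x * x))
    -- θ maps ω_A to ω_B
    (hstate : ∀ x : A, ωB (θ x) = ωA x)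
    -- GNS data for ω_A and ω_B
    (πA : A →⋆ₐ[ℂ] (HA →L[ℂ] HA)) (ΩA : HA) (hΩA : ‖ΩA‖ = 1)
    (hcycA : DenseRange fun a : A => πA a ΩA)
    (hωA : ∀ x : A, ωA x = ⟪ΩA, πA x ΩA⟫_ℂ)
    (πB : B →⋆ₐ[ℂ] (HB →L[ℂ] HB)) (ΩB : HB) (hΩB : ‖ΩB‖ = 1)
    (hcycB : DenseRange fun b : B => πB b ΩB)
    (hωB : ∀ y : B, ωB y = ⟪ΩB, πB y ΩB⟫_ℂ) :
    ∃! L : HA →L[ℂ] HB, ‖L‖ ≤ 1 ∧ ∀ x : A, L (πA x ΩA) = πB (θ x) ΩB := by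
  -- the two "vector" maps
  set T : A →ₗ[ℂ] HA :=
    { toFun := fun a => πA a ΩA
      map_add' := fun a b => by simp
      map_smul' := fun c a => by simp } with hT
  set S : A →ₗ[ℂ] HB :=
    { toFun := fun a => πB (θ a) ΩB
      map_add' := fun a b => by simp
      map_smul' := fun c a => by simp } with hS
  -- inner product formulas
  have hinnA : ∀ a : A, ωA (star a * a) = (‖πA a ΩA‖ : ℂ) ^ 2 := by
    intro a
    rw [hωA, map_mul, map_star, ContinuousLinearMap.star_eq_adjoint,
      ContinuousLinearMap.mul_apply,
      ContinuousLinearMap.adjoint_inner_right, inner_self_eq_norm_sq_to_K]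
    norm_cast
  have hinnB : ∀ b : B, ωB (star b * b) = (‖πB b ΩB‖ : ℂ) ^ 2 := by
    intro b
    rw [hωB, map_mul, map_star, ContinuousLinearMap.star_eq_adjoint,
      ContinuousLinearMap.mul_apply,
      ContinuousLinearMap.adjoint_inner_right, inner_self_eq_norm_sq_to_K]
    norm_cast
  -- ωB is positive, hence monotone
  have hposB : ∀ b : B, 0 ≤ b → 0 ≤ ωB b := by
    intro b hb
    rw [StarOrderedRing.nonneg_iff] at hb
    induction hb using AddSubmonoid.closure_induction with
    | mem x hx =>
      obtain ⟨s, rfl⟩ := hx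
      rw [hinnB]
      exact_mod_cast Complex.zero_le_real.mpr (by positivity)
    | zero => simp
    | add x y _ _ hx hy => rw [map_add]; exact add_nonneg hx hy
  have hmono : ∀ b c : B, b ≤ c → ωB b ≤ ωB c := by
    intro b c hbc
    have := hposB (c - b) (sub_nonneg.mpr hbc)
    rw [map_sub] at this
    exact sub_nonneg.mp this
  -- the key contraction estimate
  have hkey : ∀ a : A, ‖S a‖ ≤ ‖T a‖ := by
    intro a
    have h1 : (‖πB (θ a) ΩB‖ : ℂ) ^ 2 ≤ (‖πA a ΩA‖ : ℂ) ^ 2 := by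
      rw [← hinnB, ← hinnA, ← hstate (star a * a)]
      exact le_trans (hmono _ _ (hSchwarz a)) le_rfl
    have h2 : ‖πB (θ a) ΩB‖ ^ 2 ≤ ‖πA a ΩA‖ ^ 2 := by
      have := h1
      rw [show ((‖πB (θ a) ΩB‖ : ℂ)) ^ 2 = ((‖πB (θ a) ΩB‖ ^ 2 : ℝ) : ℂ) by push_cast; ring,
        show ((‖πA a ΩA‖ : ℂ)) ^ 2 = ((‖πA a ΩA‖ ^ 2 : ℝ) : ℂ) by push_cast; ring] at this
      exact_mod_cast this
    show ‖πB (θ a) ΩB‖ ≤ ‖πA a ΩA‖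
    exact (pow_le_pow_iff_left₀ (norm_nonneg _) (norm_nonneg _) two_ne_zero).mp h2
  -- ker T ≤ ker S
  have hker : LinearMap.ker T ≤ LinearMap.ker S := by
    intro a ha
    rw [LinearMap.mem_ker] at ha ⊢
    have := hkey a
    rw [ha, norm_zero] at this
    exact norm_le_zero_iff.mp this
  -- induced map on the range of T
  set L₀ : LinearMap.range T →ₗ[ℂ] HB :=
    ((LinearMap.ker T).liftQ S hker).comp T.quotKerEquivRange.symm.toLinearMap with hL₀
  have hL₀apply : ∀ a : A, L₀ ⟨T a, LinearMap.mem_range_self T a⟩ = S a := by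
    intro a
    have : (⟨T a, LinearMap.mem_range_self T a⟩ : LinearMap.range T) =
        T.quotKerEquivRange (Submodule.Quotient.mk a) := by
      ext; simp
    rw [hL₀, LinearMap.comp_apply, this]
    simp
  have hL₀norm : ∀ v : LinearMap.range T, ‖L₀ v‖ ≤ 1 * ‖v‖ := by
    rintro ⟨v, a, rfl⟩
    rw [one_mul, hL₀apply a]
    simpa using hkey a
  set f : LinearMap.range T →L[ℂ] HB := L₀.mkContinuous 1 hL₀norm with hf
  set e : LinearMap.range T →L[ℂ] HA := (LinearMap.range T).subtypeL with he
  have h_dense : DenseRange e := by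
    have : Set.range e = Set.range fun a : A => πA a ΩA := by
      ext v
      constructor
      · rintro ⟨⟨w, a, rfl⟩, rfl⟩; exact ⟨a, rfl⟩
      · rintro ⟨a, rfl⟩; exact ⟨⟨T a, LinearMap.mem_range_self T a⟩, rfl⟩
    rw [DenseRange, this]
    exact hcycA
  have h_e : ∀ x : LinearMap.range T, ‖x‖ ≤ (1 : NNReal) * ‖e x‖ := by
    intro x; simp [he]
  set L : HA →L[ℂ] HB :=
    f.extend e
    with hL
  have hLnorm : ‖L‖ ≤ 1 := by
    have := ContinuousLinearMap.opNorm_extend_le f h_dense h_e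
    have hfn : ‖f‖ ≤ 1 := L₀.mkContinuous_norm_le zero_le_one hL₀norm
    calc ‖L‖ ≤ (1 : NNReal) * ‖f‖ := this
      _ ≤ 1 := by simpa using hfn
  have hLapply : ∀ a : A, L (πA a ΩA) = πB (θ a) ΩB := by
    intro a
    have h1 : L (e ⟨T a, LinearMap.mem_range_self T a⟩) = f ⟨T a, LinearMap.mem_range_self T a⟩ :=
      ContinuousLinearMap.extend_eq f h_dense
        (ContinuousLinearMap.isUniformEmbedding_of_bound _ h_e).isUniformInducing _
    have h2 : e ⟨T a, LinearMap.mem_range_self T a⟩ = πA a ΩA := rfl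
    have h3 : f ⟨T a, LinearMap.mem_range_self T a⟩ = πB (θ a) ΩB := hL₀apply a
    rw [← h2, h1, h3]
  refine ⟨L, ⟨hLnorm, hLapply⟩, ?_⟩
  rintro L' ⟨hL'n, hL'a⟩
  apply ContinuousLinearMap.coeFn_injective
  refine hcycA.equalizer L'.continuous L.continuous (funext fun a => ?_)
  simp only [Function.comp_apply]
  rw [hL'a a, hLapply a]
end

section
/- Let C be a C*-category which is additive (has finite direct sums), Karoubi complete (all projections split: for every projection p ∈ End(X) there is an isometry v with v v* = p), and such that End_C(X) is a finite-dimensional C*-algebra for every object X. Then C is semisimple: every object is isomorphic to a finite direct sum of simple objects, where an object S is simple if End_C(S) ≅ ℂ. -/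
open CategoryTheory

/-- A C*-category: a dagger category enriched over complex Banach spaces, with
bilinear composition, submultiplicative norms, the C*-identity, and positivity of
`f* ∘ f` (written categorically as `f ≫ dag f : X ⟶ X` for `f : X ⟶ Y`). -/
class CStarCategory (C : Type*) [Category C]
    [∀ X Y : C, NormedAddCommGroup (X ⟶ Y)] [∀ X Y : C, NormedSpace ℂ (X ⟶ Y)]
    [∀ X Y : C, CompleteSpace (X ⟶ Y)] where
  dag : ∀ {X Y : C}, (X ⟶ Y) → (Y ⟶ X)
  dag_dag : ∀ {X Y : C} (f : X ⟶ Y), dag (dag f) = f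
  dag_id : ∀ X : C, dag (𝟙 X) = 𝟙 X
  dag_comp : ∀ {X Y Z : C} (f : X ⟶ Y) (g : Y ⟶ Z), dag (f ≫ g) = dag g ≫ dag f
  dag_add : ∀ {X Y : C} (f g : X ⟶ Y), dag (f + g) = dag f + dag g
  dag_smul : ∀ {X Y : C} (c : ℂ) (f : X ⟶ Y), dag (c • f) = (starRingEnd ℂ) c • dag f
  add_comp : ∀ {X Y Z : C} (f f' : X ⟶ Y) (g : Y ⟶ Z), (f + f') ≫ g = f ≫ g + f' ≫ g
  comp_add : ∀ {X Y Z : C} (f : X ⟶ Y) (g g' : Y ⟶ Z), f ≫ (g + g') = f ≫ g + f ≫ g'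
  smul_comp : ∀ {X Y Z : C} (c : ℂ) (f : X ⟶ Y) (g : Y ⟶ Z), (c • f) ≫ g = c • (f ≫ g)
  comp_smul : ∀ {X Y Z : C} (c : ℂ) (f : X ⟶ Y) (g : Y ⟶ Z), f ≫ (c • g) = c • (f ≫ g)
  norm_comp_le : ∀ {X Y Z : C} (f : X ⟶ Y) (g : Y ⟶ Z), ‖f ≫ g‖ ≤ ‖f‖ * ‖g‖
  cstar_identity : ∀ {X Y : C} (f : X ⟶ Y), ‖f ≫ dag f‖ = ‖f‖ ^ 2
  pos : ∀ {X Y : C} (f : X ⟶ Y), ∃ g : X ⟶ X, f ≫ dag f = g ≫ dag g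


open CStarCategory

/-! ### Auxiliary facts about finite-dimensional C*-algebras -/

section CStarAlgebraFacts

open scoped Classical

/-- Any function is continuous on a finite set (in a T1 space). -/
lemma CStarCatAux.continuousOn_of_finite {α : Type*} [TopologicalSpace α] [T1Space α]
    {s : Set α} (hs : s.Finite) (f : α → ℂ) : ContinuousOn f s := by
  rw [continuousOn_iff_continuous_restrict]
  haveI : Finite s := hs
  exact continuous_of_discreteTopology

/-- The spectrum of an element of a finite-dimensional complex algebra is finite. -/
lemma CStarCatAux.spectrum_finite {A : Type*} [Ring A] [Algebra ℂ A] [FiniteDimensional ℂ A]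
    (a : A) : (spectrum ℂ a).Finite := by
  haveI := Algebra.IsIntegral.of_finite ℂ A
  have hInt : IsIntegral ℂ a := Algebra.IsIntegral.isIntegral a
  have hq0 : minpoly ℂ a ≠ 0 := minpoly.ne_zero hInt
  refine Set.Finite.subset (Polynomial.finite_setOf_isRoot hq0) ?_
  intro k hk
  rcases subsingleton_or_nontrivial A with hA | hA
  · exact absurd hk (by simp [spectrum.mem_iff, isUnit_of_subsingleton])
  have h1 : Polynomial.eval k (minpoly ℂ a) ∈ spectrum ℂ (Polynomial.aeval a (minpoly ℂ a)) :=
    spectrum.subset_polynomial_aeval a (minpoly ℂ a) ⟨k, hk, rfl⟩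
  rw [minpoly.aeval, spectrum.zero_eq] at h1
  simpa [Polynomial.IsRoot] using h1

/-- A selfadjoint element whose spectrum is a single point is a scalar. -/
lemma CStarCatAux.selfadjoint_scalar_of_spectrum_singleton {A : Type*} [CStarAlgebra A]
    [Nontrivial A] {b : A} (hb : IsSelfAdjoint b) {s : ℂ} (hs : s ∈ spectrum ℂ b)
    (hss : ∀ t ∈ spectrum ℂ b, t = s) : b = s • 1 := by
  have hsre : s = s.re := hb.mem_spectrum_eq_re hs
  have hstar_s : (starRingEnd ℂ) s = s := by rw [hsre]; exact Complex.conj_ofReal _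
  have hsa : IsSelfAdjoint (b - algebraMap ℂ A s) :=
    hb.sub ((show IsSelfAdjoint s from hstar_s).algebraMap A)
  have hspec : spectrum ℂ (b - algebraMap ℂ A s) = {0} := by
    rw [← spectrum.sub_singleton_eq]
    apply Set.eq_singleton_iff_nonempty_unique_mem.mpr
    refine ⟨⟨s - s, Set.sub_mem_sub hs rfl⟩, ?_⟩
    rintro x hx
    rw [Set.mem_sub] at hx
    obtain ⟨t, ht, y, hy, rfl⟩ := hx
    rw [Set.mem_singleton_iff.mp hy, hss t ht, sub_self]
  haveI := hsa.isStarNormal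
  have hrad := IsStarNormal.spectralRadius_eq_nnnorm (b - algebraMap ℂ A s)
  rw [spectralRadius, hspec] at hrad
  simp only [Set.mem_singleton_iff, iSup_iSup_eq_left, nnnorm_zero, ENNReal.coe_zero] at hrad
  have h0 : b - algebraMap ℂ A s = 0 := by
    have := hrad.symm
    rwa [ENNReal.coe_eq_zero, nnnorm_eq_zero] at this
  rw [sub_eq_zero] at h0
  rw [h0, Algebra.algebraMap_eq_smul_one]

/-- A nontrivial finite-dimensional C*-algebra containing a non-scalar element contains a
nontrivial projection. -/
lemma CStarCatAux.exists_nontrivial_projection {A : Type*} [CStarAlgebra A]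
    [FiniteDimensional ℂ A] [Nontrivial A] (h : ∃ a : A, ∀ c : ℂ, a ≠ c • 1) :
    ∃ p : A, star p = p ∧ p * p = p ∧ p ≠ 0 ∧ p ≠ 1 := by
  -- Step 1: find a selfadjoint non-scalar element
  obtain ⟨a, ha⟩ := h
  have hsa : ∃ b : A, IsSelfAdjoint b ∧ ∀ c : ℂ, b ≠ c • 1 := by
    by_contra hcon
    push_neg at hcon
    have h₁ : IsSelfAdjoint (a + star a) := by
      rw [IsSelfAdjoint, star_add, star_star, add_comm]
    have h₂ : IsSelfAdjoint (Complex.I • (a - star a)) := by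
      rw [IsSelfAdjoint, star_smul, star_sub, star_star, Complex.star_def, Complex.conj_I,
        neg_smul, ← smul_neg, neg_sub]
    obtain ⟨c₁, hc₁⟩ := hcon _ h₁
    obtain ⟨c₂, hc₂⟩ := hcon _ h₂
    have hc₂' : a - star a = (-Complex.I * c₂) • 1 := by
      have := congrArg (fun x => (-Complex.I) • x) hc₂
      simpa [smul_smul, neg_mul, Complex.I_mul_I] using this
    apply ha ((c₁ + -Complex.I * c₂) / 2)
    have hsum : (2:ℂ) • a = (c₁ + -Complex.I * c₂) • 1 := by
      rw [two_smul, add_smul, ← hc₁, ← hc₂']; abel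
    calc a = (2⁻¹ : ℂ) • ((2:ℂ) • a) := by rw [smul_smul]; norm_num
    _ = ((c₁ + -Complex.I * c₂) / 2) • 1 := by rw [hsum, smul_smul]; congr 1; ring
  -- Step 2: its spectrum has two distinct points
  obtain ⟨b, hb, hbns⟩ := hsa
  obtain ⟨s, hs⟩ := spectrum.nonempty b
  have hex : ∃ t ∈ spectrum ℂ b, t ≠ s := by
    by_contra hcon
    push_neg at hcon
    exact hbns s (CStarCatAux.selfadjoint_scalar_of_spectrum_singleton hb hs hcon)
  obtain ⟨t, ht, hts⟩ := hex
  -- Step 3: build the projection by the continuous functional calculus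
  set f : ℂ → ℂ := fun z => if z = s then 1 else 0 with hf_def
  have hf : ContinuousOn f (spectrum ℂ b) :=
    CStarCatAux.continuousOn_of_finite (CStarCatAux.spectrum_finite b) f
  haveI hbn : IsStarNormal b := hb.isStarNormal
  refine ⟨cfc f b, ?_, ?_, ?_, ?_⟩
  · rw [← cfc_star f b]
    apply cfc_congr
    intro z _
    by_cases hz : z = s <;> simp [hf_def, hz]
  · rw [← cfc_mul f f b hf hf]
    apply cfc_congr
    intro z _
    by_cases hz : z = s <;> simp [hf_def, hz]
  · intro hzero
    have hspec : spectrum ℂ (cfc f b) = f '' spectrum ℂ b := cfc_map_spectrum f b hbn hf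
    rw [hzero, spectrum.zero_eq] at hspec
    have h1 : (1:ℂ) ∈ ({0} : Set ℂ) := hspec ▸ ⟨s, hs, by simp [hf_def]⟩
    simp at h1
  · intro hone
    have hspec : spectrum ℂ (cfc f b) = f '' spectrum ℂ b := cfc_map_spectrum f b hbn hf
    rw [hone, spectrum.one_eq] at hspec
    have h1 : (0:ℂ) ∈ ({1} : Set ℂ) := hspec ▸ ⟨t, ht, by simp [hf_def, hts]⟩
    simp at h1

end CStarAlgebraFacts

/-! ### Basic consequences of the C*-category axioms -/

namespace CStarCatAux

variable {C : Type*} [Category C]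
    [∀ X Y : C, NormedAddCommGroup (X ⟶ Y)] [∀ X Y : C, NormedSpace ℂ (X ⟶ Y)]
    [∀ X Y : C, CompleteSpace (X ⟶ Y)] [CStarCategory C]

lemma zero_comp' {X Y Z : C} (g : Y ⟶ Z) : (0 : X ⟶ Y) ≫ g = 0 := by
  have h := CStarCategory.add_comp (0 : X ⟶ Y) 0 g
  rw [add_zero] at h
  exact add_eq_left.mp h.symm

lemma comp_zero' {X Y Z : C} (f : X ⟶ Y) : f ≫ (0 : Y ⟶ Z) = 0 := by
  have h := CStarCategory.comp_add f (0 : Y ⟶ Z) 0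
  rw [add_zero] at h
  exact add_eq_left.mp h.symm

lemma dag_zero' {X Y : C} : dag (0 : X ⟶ Y) = 0 := by
  have h := CStarCategory.dag_add (0 : X ⟶ Y) 0
  rw [add_zero] at h
  exact add_eq_left.mp h.symm

lemma dag_neg' {X Y : C} (f : X ⟶ Y) : dag (-f) = -dag f := by
  have h := CStarCategory.dag_add f (-f)
  rw [add_neg_cancel, dag_zero'] at h
  exact eq_neg_of_add_eq_zero_right h.symm

lemma dag_sub' {X Y : C} (f g : X ⟶ Y) : dag (f - g) = dag f - dag g := by
  rw [sub_eq_add_neg, CStarCategory.dag_add, dag_neg', sub_eq_add_neg]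

lemma neg_comp' {X Y Z : C} (f : X ⟶ Y) (g : Y ⟶ Z) : (-f) ≫ g = -(f ≫ g) := by
  have h := CStarCategory.add_comp f (-f) g
  rw [add_neg_cancel, zero_comp'] at h
  exact eq_neg_of_add_eq_zero_right h.symm

lemma comp_neg' {X Y Z : C} (f : X ⟶ Y) (g : Y ⟶ Z) : f ≫ (-g) = -(f ≫ g) := by
  have h := CStarCategory.comp_add f g (-g)
  rw [add_neg_cancel, comp_zero'] at h
  exact eq_neg_of_add_eq_zero_right h.symm

lemma sub_comp' {X Y Z : C} (f f' : X ⟶ Y) (g : Y ⟶ Z) : (f - f') ≫ g = f ≫ g - f' ≫ g := by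
  rw [sub_eq_add_neg, CStarCategory.add_comp, neg_comp', ← sub_eq_add_neg]

lemma comp_sub' {X Y Z : C} (f : X ⟶ Y) (g g' : Y ⟶ Z) : f ≫ (g - g') = f ≫ g - f ≫ g' := by
  rw [sub_eq_add_neg, CStarCategory.comp_add, comp_neg', ← sub_eq_add_neg]

/-! ### The endomorphism C*-algebra -/

/-- Type synonym for the endomorphism algebra of an object in a C*-category. -/
def E (X : C) : Type _ := X ⟶ X

set_option synthInstance.maxHeartbeats 1000000

variable (X : C)

instance : NormedAddCommGroup (E X) := (inferInstance : NormedAddCommGroup (X ⟶ X))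
instance : NormedSpace ℂ (E X) := (inferInstance : NormedSpace ℂ (X ⟶ X))
instance : CompleteSpace (E X) := (inferInstance : CompleteSpace (X ⟶ X))

instance : Ring (E X) :=
  { (inferInstance : AddCommGroup (X ⟶ X)) with
    mul := fun a b => ((b ≫ a : X ⟶ X) : E X)
    one := (𝟙 X : X ⟶ X)
    mul_assoc := fun a b c => (Category.assoc (c : X ⟶ X) b a).symm
    one_mul := fun a => Category.comp_id (a : X ⟶ X)
    mul_one := fun a => Category.id_comp (a : X ⟶ X)
    left_distrib := fun a b c => CStarCategory.add_comp (b : X ⟶ X) c a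
    right_distrib := fun a b c => CStarCategory.comp_add (c : X ⟶ X) a b
    zero_mul := fun a => comp_zero' (a : X ⟶ X)
    mul_zero := fun a => zero_comp' (a : X ⟶ X) }

instance : NormedRing (E X) :=
  { (inferInstanceAs (NormedAddCommGroup (E X)) : NormedAddCommGroup (E X)),
    (inferInstanceAs (Ring (E X)) : Ring (E X)) with
    norm_mul_le := fun a b => (mul_comm ‖a‖ ‖b‖) ▸ CStarCategory.norm_comp_le (b : X ⟶ X) a }

instance : StarRing (E X) where
  star a := (dag (a : X ⟶ X) : E X)
  star_involutive a := CStarCategory.dag_dag (a : X ⟶ X)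
  star_mul a b := CStarCategory.dag_comp (b : X ⟶ X) a
  star_add a b := CStarCategory.dag_add (a : X ⟶ X) b

instance : Algebra ℂ (E X) :=
  Algebra.ofModule (fun c a b => CStarCategory.comp_smul c (b : X ⟶ X) a)
    (fun c a b => CStarCategory.smul_comp c (b : X ⟶ X) a)

instance : NormedAlgebra ℂ (E X) :=
  { (inferInstanceAs (Algebra ℂ (E X)) : Algebra ℂ (E X)) with
    norm_smul_le := fun c a => norm_smul_le c (a : X ⟶ X) }

instance : StarModule ℂ (E X) := ⟨fun c a => CStarCategory.dag_smul c (a : X ⟶ X)⟩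

instance : CStarRing (E X) where
  norm_mul_self_le a := le_of_eq <| by
    have h := CStarCategory.cstar_identity (a : X ⟶ X)
    calc ‖a‖ * ‖a‖ = ‖(a : X ⟶ X)‖ ^ 2 := (sq ‖a‖).symm
    _ = ‖(a : X ⟶ X) ≫ dag a‖ := h.symm
    _ = ‖Star.star a * a‖ := rfl

noncomputable instance : CStarAlgebra (E X) :=
  { (inferInstanceAs (NormedRing (E X)) : NormedRing (E X)),
    (inferInstanceAs (StarRing (E X)) : StarRing (E X)),
    (inferInstanceAs (CStarRing (E X)) : CStarRing (E X)),
    (inferInstanceAs (NormedAlgebra ℂ (E X)) : NormedAlgebra ℂ (E X)),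
    (inferInstanceAs (StarModule ℂ (E X)) : StarModule ℂ (E X)),
    (inferInstanceAs (CompleteSpace (E X)) : CompleteSpace (E X)) with }

/-- Conjugation by an isometry, as a linear map between hom spaces. -/
def conjMap {Y X : C} (v : Y ⟶ X) : (Y ⟶ Y) →ₗ[ℂ] (X ⟶ X) where
  toFun f := dag v ≫ (f ≫ v)
  map_add' f g := by
    rw [CStarCategory.add_comp, CStarCategory.comp_add]
  map_smul' c f := by
    simp only [RingHom.id_apply]
    rw [CStarCategory.smul_comp, CStarCategory.comp_smul]

end CStarCatAux

namespace CStarCatAux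
variable {C : Type*} [Category C]
    [∀ X Y : C, NormedAddCommGroup (X ⟶ Y)] [∀ X Y : C, NormedSpace ℂ (X ⟶ Y)]
    [∀ X Y : C, CompleteSpace (X ⟶ Y)] [CStarCategory C]

/-- Compressing to a corner strictly reduces the dimension of the endomorphism algebra when
there is a nonzero element killed by the corner projection. -/
lemma finrank_lt_of_split {X Y : C} (v : Y ⟶ X) (p r : X ⟶ X)
    (hv1 : v ≫ dag v = 𝟙 Y) (hv2 : dag v ≫ v = p)
    (hpr : p ≫ r = 0) (hr0 : r ≠ 0) [FiniteDimensional ℂ (X ⟶ X)] :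
    Module.finrank ℂ (Y ⟶ Y) < Module.finrank ℂ (X ⟶ X) := by
  set Φ := conjMap v with hΦ
  have hrec : ∀ f : Y ⟶ Y, v ≫ (Φ f ≫ dag v) = f := by
    intro f
    show v ≫ ((dag v ≫ (f ≫ v)) ≫ dag v) = f
    calc v ≫ ((dag v ≫ (f ≫ v)) ≫ dag v)
        = (v ≫ dag v) ≫ f ≫ (v ≫ dag v) := by simp only [Category.assoc]
      _ = f := by rw [hv1, Category.id_comp, Category.comp_id]
  have hinj : Function.Injective Φ := by
    intro f g hfg
    rw [← hrec f, ← hrec g, hfg]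
  have hrange : r ∉ LinearMap.range Φ := by
    rintro ⟨f, hf⟩
    apply hr0
    have hpf : p ≫ Φ f = Φ f := by
      show p ≫ (dag v ≫ (f ≫ v)) = dag v ≫ (f ≫ v)
      rw [← hv2]
      calc (dag v ≫ v) ≫ (dag v ≫ (f ≫ v)) = dag v ≫ (v ≫ dag v) ≫ (f ≫ v) := by
            simp only [Category.assoc]
        _ = dag v ≫ (f ≫ v) := by rw [hv1, Category.id_comp]
    rw [← hf, ← hpf, hf]
    exact hpr
  have h1 : Module.finrank ℂ (Y ⟶ Y) = Module.finrank ℂ (LinearMap.range Φ) :=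
    (LinearMap.finrank_range_of_inj hinj).symm
  have h2 : LinearMap.range Φ < ⊤ :=
    lt_top_iff_ne_top.mpr (fun h => hrange (h ▸ Submodule.mem_top))
  rw [h1]
  exact Submodule.finrank_lt h2.ne

end CStarCatAux

open CStarCatAux in
/-- An additive (finite direct sums), Karoubi complete (projections
split via isometries) C*-category all of whose endomorphism algebras are
finite-dimensional is semisimple: every object is a finite direct sum (witnessed by
a family of isometries with orthogonal ranges summing to the identity) of simple
objects, i.e. objects whose endomorphism C*-algebra is `ℂ`. -/
theorem stmt14 {C : Type*} [Category C]
    [∀ X Y : C, NormedAddCommGroup (X ⟶ Y)] [∀ X Y : C, NormedSpace ℂ (X ⟶ Y)]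
    [∀ X Y : C, CompleteSpace (X ⟶ Y)] [CStarCategory C]
    -- C has finite direct sums
    (hsums : ∀ X Y : C, ∃ (Z : C) (i₁ : X ⟶ Z) (i₂ : Y ⟶ Z),
      i₁ ≫ dag i₁ = 𝟙 X ∧ i₂ ≫ dag i₂ = 𝟙 Y ∧ i₁ ≫ dag i₂ = 0 ∧
      dag i₁ ≫ i₁ + dag i₂ ≫ i₂ = 𝟙 Z)
    -- C is Karoubi complete: every projection splits via an isometry
    (hkaroubi : ∀ (X : C) (p : X ⟶ X), dag p = p → p ≫ p = p →
      ∃ (Y : C) (v : Y ⟶ X), v ≫ dag v = 𝟙 Y ∧ dag v ≫ v = p)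
    -- all endomorphism C*-algebras are finite dimensional
    (hfin : ∀ X : C, FiniteDimensional ℂ (X ⟶ X)) :
    -- C is semisimple
    ∀ X : C, ∃ (n : ℕ) (S : Fin n → C) (ι : ∀ i, S i ⟶ X),
      (∀ i, ∀ f : S i ⟶ S i, ∃! c : ℂ, f = c • 𝟙 (S i)) ∧
      (∀ i, ι i ≫ dag (ι i) = 𝟙 (S i)) ∧
      (∀ i j, i ≠ j → ι i ≫ dag (ι j) = 0) ∧
      (∑ i, dag (ι i) ≫ ι i) = 𝟙 X := by
  intro X
  generalize hN : Module.finrank ℂ (X ⟶ X) = N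
  induction N using Nat.strong_induction_on generalizing X with
  | _ N ih =>
  haveI := hfin X
  by_cases h0 : (𝟙 X : X ⟶ X) = 0
  · -- X is a zero object: empty direct sum
    exact ⟨0, Fin.elim0, fun i => i.elim0, fun i => i.elim0, fun i => i.elim0,
      fun i => i.elim0, by rw [Finset.univ_eq_empty, Finset.sum_empty, h0]⟩
  by_cases hsc : ∀ f : X ⟶ X, ∃ c : ℂ, f = c • 𝟙 X
  · -- X is simple
    refine ⟨1, fun _ => X, fun _ => 𝟙 X, ?_, ?_, ?_, ?_⟩
    · intro i f
      obtain ⟨c, hc⟩ := hsc f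
      refine ⟨c, hc, fun c' hc' => ?_⟩
      have hz : (c' - c) • 𝟙 X = 0 := by rw [sub_smul, ← hc, ← hc', sub_self]
      rcases smul_eq_zero.mp hz with h | h
      · exact sub_eq_zero.mp h
      · exact absurd h h0
    · intro i
      rw [CStarCategory.dag_id, Category.id_comp]
    · intro i j hij
      exact absurd (Subsingleton.elim i j) hij
    · rw [Fin.sum_univ_one, CStarCategory.dag_id, Category.id_comp]
  · -- X has a non-scalar endomorphism: split off a nontrivial corner
    haveI : Nontrivial (E X) := nontrivial_of_ne 1 0 h0
    haveI : FiniteDimensional ℂ (E X) := hfin X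
    push_neg at hsc
    obtain ⟨a, ha⟩ := hsc
    obtain ⟨p, hp1, hp2, hp3, hp4⟩ :=
      CStarCatAux.exists_nontrivial_projection (A := E X) ⟨a, ha⟩
    -- translate to categorical language
    set pc : X ⟶ X := p with hpc_def
    have hdagp : dag pc = pc := hp1
    have hppc : pc ≫ pc = pc := hp2
    have hpc0 : pc ≠ 0 := hp3
    have hpc1 : pc ≠ 𝟙 X := hp4
    set q : X ⟶ X := 𝟙 X - pc with hq_def
    have hdagq : dag q = q := by
      rw [hq_def, dag_sub', CStarCategory.dag_id, hdagp]
    have hqq : q ≫ q = q := by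
      rw [hq_def, sub_comp', comp_sub', comp_sub', Category.id_comp, Category.id_comp,
        Category.comp_id, hppc]
      abel
    have hq0 : q ≠ 0 := by
      intro h
      exact hpc1 (sub_eq_zero.mp h).symm
    have hpq : pc ≫ q = 0 := by rw [hq_def, comp_sub', Category.comp_id, hppc, sub_self]
    have hqp : q ≫ pc = 0 := by rw [hq_def, sub_comp', Category.id_comp, hppc, sub_self]
    obtain ⟨Y, v, hv1, hv2⟩ := hkaroubi X pc hdagp hppc
    obtain ⟨Z, w, hw1, hw2⟩ := hkaroubi X q hdagq hqq
    -- the corners have strictly smaller endomorphism algebras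
    have hltY := finrank_lt_of_split v pc q hv1 hv2 hpq hq0
    have hltZ := finrank_lt_of_split w q pc hw1 hw2 hqp hpc0
    rw [hN] at hltY hltZ
    obtain ⟨n, S, ι, hsimpY, hisoY, horthY, hsumY⟩ :=
      ih (Module.finrank ℂ (Y ⟶ Y)) hltY Y rfl
    obtain ⟨m, T, κ, hsimpZ, hisoZ, horthZ, hsumZ⟩ :=
      ih (Module.finrank ℂ (Z ⟶ Z)) hltZ Z rfl
    -- orthogonality of the two corners
    have hvp : v ≫ pc = v := by rw [← hv2, ← Category.assoc, hv1, Category.id_comp]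
    have hwq : w ≫ q = w := by rw [← hw2, ← Category.assoc, hw1, Category.id_comp]
    have hqdw : q ≫ dag w = dag w := by
      have h := congrArg dag hwq
      rwa [CStarCategory.dag_comp, hdagq] at h
    have hpcdw : pc ≫ dag w = 0 := by rw [← hqdw, ← Category.assoc, hpq, zero_comp']
    have hvw : v ≫ dag w = 0 := by
      calc v ≫ dag w = (v ≫ pc) ≫ dag w := by rw [hvp]
        _ = v ≫ (pc ≫ dag w) := Category.assoc _ _ _
        _ = 0 := by rw [hpcdw, comp_zero']
    have hwv : w ≫ dag v = 0 := by
      have h := congrArg dag hvw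
      rwa [CStarCategory.dag_comp, CStarCategory.dag_dag, dag_zero'] at h
    -- assemble the decomposition
    set e : Fin n ⊕ Fin m ≃ Fin (n + m) := finSumFinEquiv with he_def
    set Sfun : Fin n ⊕ Fin m → C := Sum.elim S T with hSfun_def
    set ιfun : ∀ j : Fin n ⊕ Fin m, Sfun j ⟶ X :=
      fun j => match j with
        | .inl i => ι i ≫ v
        | .inr k => κ k ≫ w
      with hιfun_def
    have hsimpSum : ∀ a, ∀ f : Sfun a ⟶ Sfun a, ∃! c : ℂ, f = c • 𝟙 (Sfun a) := by
      rintro (i' | k') f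
      · exact hsimpY i' f
      · exact hsimpZ k' f
    have hisoSum : ∀ a, ιfun a ≫ dag (ιfun a) = 𝟙 (Sfun a) := by
      rintro (i' | k')
      · show (ι i' ≫ v) ≫ dag (ι i' ≫ v) = 𝟙 (S i')
        rw [CStarCategory.dag_comp]
        calc (ι i' ≫ v) ≫ (dag v ≫ dag (ι i')) = ι i' ≫ (v ≫ dag v) ≫ dag (ι i') := by
              simp only [Category.assoc]
          _ = 𝟙 (S i') := by rw [hv1, Category.id_comp, hisoY i']
      · show (κ k' ≫ w) ≫ dag (κ k' ≫ w) = 𝟙 (T k')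
        rw [CStarCategory.dag_comp]
        calc (κ k' ≫ w) ≫ (dag w ≫ dag (κ k')) = κ k' ≫ (w ≫ dag w) ≫ dag (κ k') := by
              simp only [Category.assoc]
          _ = 𝟙 (T k') := by rw [hw1, Category.id_comp, hisoZ k']
    have horthSum : ∀ a b, a ≠ b → ιfun a ≫ dag (ιfun b) = 0 := by
      rintro (i' | k') (j' | l') hab
      · -- both in Y
        have hne : i' ≠ j' := fun h => hab (by rw [h])
        show (ι i' ≫ v) ≫ dag (ι j' ≫ v) = 0
        rw [CStarCategory.dag_comp]
        calc (ι i' ≫ v) ≫ (dag v ≫ dag (ι j')) = ι i' ≫ (v ≫ dag v) ≫ dag (ι j') := by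
              simp only [Category.assoc]
          _ = ι i' ≫ dag (ι j') := by rw [hv1, Category.id_comp]
          _ = 0 := horthY i' j' hne
      · show (ι i' ≫ v) ≫ dag (κ l' ≫ w) = 0
        rw [CStarCategory.dag_comp]
        calc (ι i' ≫ v) ≫ (dag w ≫ dag (κ l')) = ι i' ≫ (v ≫ dag w) ≫ dag (κ l') := by
              simp only [Category.assoc]
          _ = 0 := by rw [hvw, zero_comp', comp_zero']
      · show (κ k' ≫ w) ≫ dag (ι j' ≫ v) = 0
        rw [CStarCategory.dag_comp]
        calc (κ k' ≫ w) ≫ (dag v ≫ dag (ι j')) = κ k' ≫ (w ≫ dag v) ≫ dag (ι j') := by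
              simp only [Category.assoc]
          _ = 0 := by rw [hwv, zero_comp', comp_zero']
      · have hne : k' ≠ l' := fun h => hab (by rw [h])
        show (κ k' ≫ w) ≫ dag (κ l' ≫ w) = 0
        rw [CStarCategory.dag_comp]
        calc (κ k' ≫ w) ≫ (dag w ≫ dag (κ l')) = κ k' ≫ (w ≫ dag w) ≫ dag (κ l') := by
              simp only [Category.assoc]
          _ = κ k' ≫ dag (κ l') := by rw [hw1, Category.id_comp]
          _ = 0 := horthZ k' l' hne
    refine ⟨n + m, fun i => Sfun (e.symm i), fun i => ιfun (e.symm i),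
      fun i => hsimpSum (e.symm i), fun i => hisoSum (e.symm i),
      fun i j hij => horthSum (e.symm i) (e.symm j)
        (fun h => hij (by rw [← e.apply_symm_apply i, ← e.apply_symm_apply j, h])), ?_⟩
    · -- completeness of the family
      have hre : (∑ i : Fin (n + m), dag (ιfun (e.symm i)) ≫ ιfun (e.symm i))
          = ∑ j : Fin n ⊕ Fin m, dag (ιfun j) ≫ ιfun j :=
        Fintype.sum_equiv e.symm _ _ (fun i => rfl)
      rw [hre, Fintype.sum_sum_type]
      have hA : (∑ i : Fin n, dag (ιfun (Sum.inl i)) ≫ ιfun (Sum.inl i)) = pc := by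
        have h1 : ∀ i : Fin n,
            dag (ιfun (Sum.inl i)) ≫ ιfun (Sum.inl i) = conjMap v (dag (ι i) ≫ ι i) := by
          intro i
          show dag (ι i ≫ v) ≫ (ι i ≫ v) = dag v ≫ ((dag (ι i) ≫ ι i) ≫ v)
          simp only [CStarCategory.dag_comp, Category.assoc]
        calc (∑ i : Fin n, dag (ιfun (Sum.inl i)) ≫ ιfun (Sum.inl i))
            = ∑ i : Fin n, conjMap v (dag (ι i) ≫ ι i) :=
              Finset.sum_congr rfl (fun i _ => h1 i)
          _ = conjMap v (∑ i : Fin n, dag (ι i) ≫ ι i) := (map_sum _ _ _).symm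
          _ = pc := by
              rw [hsumY]
              show dag v ≫ (𝟙 Y ≫ v) = pc
              rw [Category.id_comp, hv2]
      have hB : (∑ k : Fin m, dag (ιfun (Sum.inr k)) ≫ ιfun (Sum.inr k)) = q := by
        have h1 : ∀ k : Fin m,
            dag (ιfun (Sum.inr k)) ≫ ιfun (Sum.inr k) = conjMap w (dag (κ k) ≫ κ k) := by
          intro k
          show dag (κ k ≫ w) ≫ (κ k ≫ w) = dag w ≫ ((dag (κ k) ≫ κ k) ≫ w)
          simp only [CStarCategory.dag_comp, Category.assoc]
        calc (∑ k : Fin m, dag (ιfun (Sum.inr k)) ≫ ιfun (Sum.inr k))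
            = ∑ k : Fin m, conjMap w (dag (κ k) ≫ κ k) :=
              Finset.sum_congr rfl (fun k _ => h1 k)
          _ = conjMap w (∑ k : Fin m, dag (κ k) ≫ κ k) := (map_sum _ _ _).symm
          _ = q := by
              rw [hsumZ]
              show dag w ≫ (𝟙 Z ≫ w) = q
              rw [Category.id_comp, hw2]
      rw [hA, hB, hq_def]
      abel
end
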